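/- arXiv:1607.05447 — 2 statements merged into one kernel-verified Lean document; each statement's English description precedes it below -/
import Mathlib

section
/- Equality-constrained implicit differentiation: Let f : ℝ × ℝⁿ → ℝ be twice continuously differentiable, A an m×n real matrix of rank m, H = ∇²_{yy}f(x, y⋆) invertible with A H⁻¹ Aᵀ invertible, and suppose (y⋆(x), λ⋆(x)) are differentiable functions satisfying the stationarity conditions ∇_y f(x, y⋆(x)) + Aᵀλ⋆(x) = 0 and A y⋆(x) = b for all x. Then d y⋆/dx = (H⁻¹ Aᵀ (A H⁻¹ Aᵀ)⁻¹ A H⁻¹ - H⁻¹) · f_{XY}(x, y⋆(x)), where f_{XY} = ∂/∂x ∇_y f. -/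
open Matrix

theorem stmt_10 (n m : ℕ) (f : ℝ → (Fin n → ℝ) → ℝ)
    (hf : ContDiff ℝ 2 (Function.uncurry f))
    (A : Matrix (Fin m) (Fin n) ℝ) (hrank : A.rank = m) (b : Fin m → ℝ)
    (ystar : ℝ → Fin n → ℝ) (lstar : ℝ → Fin m → ℝ)
    (hy : Differentiable ℝ ystar) (hl : Differentiable ℝ lstar)
    (hstat : ∀ x, (fun i => fderiv ℝ (f x) (ystar x) (Pi.single i 1)) +
      Matrix.mulVec Aᵀ (lstar x) = 0)
    (hfeas : ∀ x, A.mulVec (ystar x) = b) (x : ℝ)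
    (H : Matrix (Fin n) (Fin n) ℝ)
    (hH : ∀ i j, H i j =
      fderiv ℝ (fun y => fderiv ℝ (f x) y (Pi.single i 1)) (ystar x) (Pi.single j 1))
    (hHinv : IsUnit H.det) (hSinv : IsUnit (A * H⁻¹ * Aᵀ).det) :
    deriv ystar x =
      (H⁻¹ * Aᵀ * (A * H⁻¹ * Aᵀ)⁻¹ * A * H⁻¹ - H⁻¹).mulVec
        (fun i => deriv (fun x' => fderiv ℝ (f x') (ystar x) (Pi.single i 1)) x) := by
  classical
  set F : ℝ × (Fin n → ℝ) → ℝ := Function.uncurry f with hFdef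
  have hF2 : ContDiff ℝ 2 F := hf
  have hFd : Differentiable ℝ F := hF2.differentiable (by norm_num)
  have hDc : ContDiff ℝ 1 (fderiv ℝ F) := hF2.fderiv_right (by norm_num)
  have hDd : Differentiable ℝ (fderiv ℝ F) := hDc.differentiable (by norm_num)
  -- partial derivative in y equals restriction of full derivative
  have hpart : ∀ (x' : ℝ) (y v : Fin n → ℝ),
      fderiv ℝ (f x') y v = fderiv ℝ F (x', y) (0, v) := by
    intro x' y v
    have h1 : HasFDerivAt (fun y' => (x', y'))
        (ContinuousLinearMap.inr ℝ ℝ (Fin n → ℝ)) y := hasFDerivAt_prodMk_right x' y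
    have h2 : HasFDerivAt F (fderiv ℝ F (x', y)) (x', y) := (hFd _).hasFDerivAt
    have h3 : HasFDerivAt (f x')
        ((fderiv ℝ F (x', y)).comp (ContinuousLinearMap.inr ℝ ℝ (Fin n → ℝ))) y :=
      h2.comp y h1
    rw [h3.fderiv]; rfl
  set p : ℝ × (Fin n → ℝ) := (x, ystar x) with hp
  set B : (ℝ × (Fin n → ℝ)) →L[ℝ] (ℝ × (Fin n → ℝ)) →L[ℝ] ℝ := fderiv ℝ (fderiv ℝ F) p with hB
  set y' : Fin n → ℝ := deriv ystar x with hy'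
  set lam' : Fin m → ℝ := deriv lstar x with hlam'
  set c : Fin n → ℝ :=
    (fun i => deriv (fun x' => fderiv ℝ (f x') (ystar x) (Pi.single i 1)) x) with hc
  -- derivative of q ↦ fderiv F q w at p
  have hphi : ∀ w : ℝ × (Fin n → ℝ), HasFDerivAt (fun q => fderiv ℝ F q w)
      ((ContinuousLinearMap.apply ℝ ℝ w).comp B) p :=
    fun w => (ContinuousLinearMap.apply ℝ ℝ w).hasFDerivAt.comp p (hDd p).hasFDerivAt
  -- curve x' ↦ (x', ystar x')
  have hcurve : HasDerivAt (fun x' => (x', ystar x')) ((1 : ℝ), y') x :=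
    (hasDerivAt_id x).prodMk (hy x).hasDerivAt
  have hconstcurve : HasDerivAt (fun x' => (x', ystar x)) ((1 : ℝ), (0 : Fin n → ℝ)) x :=
    (hasDerivAt_id x).prodMk (hasDerivAt_const x _)
  -- c i = B (1,0) (0, e i)
  have hcB : ∀ i, c i = B (1, 0) (0, Pi.single i 1) := by
    intro i
    have h1 : HasDerivAt (fun x' => fderiv ℝ F (x', ystar x) (0, Pi.single i 1))
        (B (1, 0) (0, Pi.single i 1)) x :=
      by have h := (hphi (0, Pi.single i 1)).comp_hasDerivAt x hconstcurve; exact h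
    have h2 : (fun x' => fderiv ℝ (f x') (ystar x) (Pi.single i 1)) =
        fun x' => fderiv ℝ F (x', ystar x) (0, Pi.single i 1) := by
      funext x'; exact hpart x' (ystar x) _
    simp only [hc, h2]
    exact h1.deriv
  -- H i j = B (0, e j) (0, e i)
  have hHB : ∀ i j, H i j = B (0, Pi.single j 1) (0, Pi.single i 1) := by
    intro i j
    have h2 : (fun y => fderiv ℝ (f x) y (Pi.single i 1)) =
        fun y => fderiv ℝ F (x, y) (0, Pi.single i 1) := by
      funext y; exact hpart x y _
    have h3 : HasFDerivAt (fun y => fderiv ℝ F (x, y) (0, Pi.single i 1))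
        (((ContinuousLinearMap.apply ℝ ℝ (0, Pi.single i 1)).comp B).comp
          (ContinuousLinearMap.inr ℝ ℝ (Fin n → ℝ))) (ystar x) :=
      (hphi (0, Pi.single i 1)).comp (ystar x) (hasFDerivAt_prodMk_right x (ystar x))
    rw [hH i j, h2, h3.fderiv]; rfl
  -- component derivative of lstar
  have hlcomp : ∀ k, HasDerivAt (fun x' => lstar x' k) (lam' k) x := fun k =>
    (ContinuousLinearMap.proj (R := ℝ) (φ := fun _ : Fin m => ℝ) k).hasFDerivAt.comp_hasDerivAt
      x (hl x).hasDerivAt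
  have hycomp : ∀ j, HasDerivAt (fun x' => ystar x' j) (y' j) x := fun j =>
    (ContinuousLinearMap.proj (R := ℝ) (φ := fun _ : Fin n => ℝ) j).hasFDerivAt.comp_hasDerivAt
      x (hy x).hasDerivAt
  -- derivative of stationarity: B (1, y') (0, e i) + (Aᵀ *ᵥ lam') i = 0
  have hE1 : ∀ i, B (1, y') (0, Pi.single i 1) + Aᵀ.mulVec lam' i = 0 := by
    intro i
    have hg : HasDerivAt (fun x' => fderiv ℝ F (x', ystar x') (0, Pi.single i 1))
        (B (1, y') (0, Pi.single i 1)) x :=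
      by have h := (hphi (0, Pi.single i 1)).comp_hasDerivAt x hcurve; exact h
    have ha : HasDerivAt (fun x' => Aᵀ.mulVec (lstar x') i) (Aᵀ.mulVec lam' i) x := by
      simp only [Matrix.mulVec, dotProduct]
      exact HasDerivAt.fun_sum fun k _ => (hlcomp k).const_mul _
    have hsum : HasDerivAt (fun x' =>
        fderiv ℝ F (x', ystar x') (0, Pi.single i 1) + Aᵀ.mulVec (lstar x') i)
        (B (1, y') (0, Pi.single i 1) + Aᵀ.mulVec lam' i) x := hg.add ha
    have hzero : (fun x' =>
        fderiv ℝ F (x', ystar x') (0, Pi.single i 1) + Aᵀ.mulVec (lstar x') i) =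
        fun _ => (0 : ℝ) := by
      funext x'
      have := congrFun (hstat x') i
      simp only [Pi.add_apply, Pi.zero_apply] at this
      rw [← hpart x' (ystar x') (Pi.single i 1)]
      exact this
    rw [hzero] at hsum
    exact hsum.unique (hasDerivAt_const x 0)
  -- derivative of feasibility: A *ᵥ y' = 0
  have hE2 : A.mulVec y' = 0 := by
    funext k
    have ha : HasDerivAt (fun x' => A.mulVec (ystar x') k) (A.mulVec y' k) x := by
      simp only [Matrix.mulVec, dotProduct]
      exact HasDerivAt.fun_sum fun j _ => (hycomp j).const_mul _
    have hzero : (fun x' => A.mulVec (ystar x') k) = fun _ => b k := by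
      funext x'; rw [hfeas x']
    rw [hzero] at ha
    have := ha.unique (hasDerivAt_const x (b k))
    simpa using this
  -- expand B (1, y') using linearity
  have hexp : ∀ i, B (1, y') (0, Pi.single i 1) = c i + H.mulVec y' i := by
    intro i
    have hd : ((1 : ℝ), y') = ((1 : ℝ), (0 : Fin n → ℝ)) +
        ∑ j, y' j • ((0 : ℝ), (Pi.single j 1 : Fin n → ℝ)) := by
      refine Prod.ext ?_ ?_
      · simp [Prod.fst_sum]
      · simp only [Prod.snd_add, Prod.snd_sum, Prod.smul_snd]
        funext k
        simp [Finset.sum_apply, Pi.single_apply, Finset.sum_ite_eq']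
    rw [hd, map_add, map_sum, ContinuousLinearMap.add_apply,
      ContinuousLinearMap.sum_apply, hcB i]
    congr 1
    rw [Matrix.mulVec, dotProduct]
    refine Finset.sum_congr rfl fun j _ => ?_
    rw [_root_.map_smul, ContinuousLinearMap.smul_apply, smul_eq_mul, hHB i j]
    ring
  -- vector equation: c + H *ᵥ y' + Aᵀ *ᵥ lam' = 0
  have hvec : H.mulVec y' = -c - Aᵀ.mulVec lam' := by
    funext i
    have := hE1 i
    rw [hexp i] at this
    simp only [Pi.sub_apply, Pi.neg_apply]
    linarith
  have hyv : y' = H⁻¹.mulVec (-c - Aᵀ.mulVec lam') := by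
    rw [← hvec, Matrix.mulVec_mulVec, Matrix.nonsing_inv_mul H hHinv, Matrix.one_mulVec]
  have hlamv : (A * H⁻¹ * Aᵀ).mulVec lam' = -((A * H⁻¹).mulVec c) := by
    have h0 : A.mulVec (H⁻¹.mulVec (-c - Aᵀ.mulVec lam')) = 0 := by rw [← hyv]; exact hE2
    rw [Matrix.mulVec_mulVec, Matrix.mulVec_sub, Matrix.mulVec_neg, Matrix.mulVec_mulVec] at h0
    funext k
    have := congrFun h0 k
    simp only [Pi.sub_apply, Pi.neg_apply, Pi.zero_apply] at this
    simp only [Pi.neg_apply]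
    linarith
  have hlam2 : lam' = -(((A * H⁻¹ * Aᵀ)⁻¹ * (A * H⁻¹)).mulVec c) := by
    have h1 : (A * H⁻¹ * Aᵀ)⁻¹.mulVec ((A * H⁻¹ * Aᵀ).mulVec lam') =
        (A * H⁻¹ * Aᵀ)⁻¹.mulVec (-((A * H⁻¹).mulVec c)) := by rw [hlamv]
    rw [Matrix.mulVec_mulVec, Matrix.nonsing_inv_mul _ hSinv, Matrix.one_mulVec,
      Matrix.mulVec_neg, Matrix.mulVec_mulVec] at h1
    exact h1
  rw [hyv, hlam2]
  simp only [Matrix.mulVec_sub, Matrix.mulVec_neg, Matrix.sub_mulVec,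
    Matrix.mulVec_mulVec, Matrix.mul_assoc, Matrix.neg_mulVec]
  abel
end

section
/- Null-space parameterization: Let f : ℝ × ℝⁿ → ℝ be twice continuously differentiable, F an n×k matrix whose columns span the null space of A, y₀ with A y₀ = b, and z⋆ : ℝ → ℝᵏ differentiable with Fᵀ∇_y f(x, y₀ + F z⋆(x)) = 0 for all x. If Fᵀ H F is invertible where H = ∇²_{yy}f(x, g(x)) and g(x) = y₀ + F z⋆(x), then g'(x) = -F (Fᵀ H F)⁻¹ Fᵀ f_{XY}(x, g(x)). -/
open Matrix

theorem stmt_12 (n m k : ℕ) (f : ℝ → (Fin n → ℝ) → ℝ)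
    (hf : ContDiff ℝ 2 (Function.uncurry f))
    (A : Matrix (Fin m) (Fin n) ℝ) (F : Matrix (Fin n) (Fin k) ℝ)
    (hspan : LinearMap.range F.mulVecLin = LinearMap.ker A.mulVecLin)
    (b : Fin m → ℝ) (y₀ : Fin n → ℝ) (hy₀ : A.mulVec y₀ = b)
    (zstar : ℝ → Fin k → ℝ) (hz : Differentiable ℝ zstar)
    (g : ℝ → Fin n → ℝ) (hg : ∀ x, g x = y₀ + F.mulVec (zstar x))
    (hstat : ∀ x, Matrix.mulVec Fᵀ
      (fun i => fderiv ℝ (f x) (g x) (Pi.single i 1)) = 0)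
    (x : ℝ) (H : Matrix (Fin n) (Fin n) ℝ)
    (hH : ∀ i j, H i j =
      fderiv ℝ (fun y => fderiv ℝ (f x) y (Pi.single i 1)) (g x) (Pi.single j 1))
    (hinv : IsUnit (Fᵀ * H * F).det) :
    deriv g x = -(F.mulVec ((Fᵀ * H * F)⁻¹.mulVec (Matrix.mulVec Fᵀ
      (fun i => deriv (fun x' => fderiv ℝ (f x') (g x) (Pi.single i 1)) x)))) := by
  classical
  set u := Function.uncurry f with hu_def
  have hu : ContDiff ℝ 2 u := hf
  have hud : Differentiable ℝ u := hu.differentiable (by norm_num)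
  have hu1 : ContDiff ℝ 1 (fderiv ℝ u) := hu.fderiv_right (by norm_num)
  have hud1 : Differentiable ℝ (fderiv ℝ u) := hu1.differentiable (by norm_num)
  -- Lemma A: partial derivative in y
  have hA : ∀ (a : ℝ) (y : Fin n → ℝ), fderiv ℝ (f a) y
      = (fderiv ℝ u (a, y)).comp (ContinuousLinearMap.inr ℝ ℝ (Fin n → ℝ)) := by
    intro a y
    have h1 : HasFDerivAt (fun y' : Fin n → ℝ => (a, y'))
        (ContinuousLinearMap.inr ℝ ℝ (Fin n → ℝ)) y := hasFDerivAt_prodMk_right a y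
    have h2 : HasFDerivAt u (fderiv ℝ u (a, y)) (a, y) := (hud (a, y)).hasFDerivAt
    have h3 := h2.comp y h1
    have heq : (u ∘ fun y' : Fin n → ℝ => (a, y')) = f a := by
      funext y'; rfl
    rw [heq] at h3
    exact h3.fderiv
  -- derivative of g
  have hzd : HasDerivAt zstar (deriv zstar x) x := (hz x).hasDerivAt
  set z' := deriv zstar x with hz'_def
  set gd := F.mulVec z' with hgd_def
  have FCLM : (Fin k → ℝ) →L[ℝ] (Fin n → ℝ) := LinearMap.toContinuousLinearMap F.mulVecLin
  have hgder : HasDerivAt g gd x := by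
    have hgeq : g = fun x' => y₀ + F.mulVec (zstar x') := funext hg
    rw [hgeq]
    have h1 : HasDerivAt (fun x' => F.mulVec (zstar x')) gd x := by
      have := (LinearMap.toContinuousLinearMap F.mulVecLin).hasFDerivAt.comp_hasDerivAt x hzd
      simpa [Function.comp_def] using this
    simpa using h1.const_add y₀
  set D2 := fderiv ℝ (fderiv ℝ u) (x, g x) with hD2_def
  have hD2 : HasFDerivAt (fderiv ℝ u) D2 (x, g x) := (hud1 (x, g x)).hasFDerivAt
  -- evaluation CLM
  have happly : ∀ (v : ℝ × (Fin n → ℝ)) (L : (ℝ × (Fin n → ℝ)) →L[ℝ] ℝ),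
      (ContinuousLinearMap.apply ℝ ℝ v) L = L v := fun _ _ => rfl
  -- H entries as second derivatives
  have hHD2 : ∀ i j, H i j = D2 ((0 : ℝ), Pi.single j 1) ((0 : ℝ), Pi.single i 1) := by
    intro i j
    rw [hH i j]
    have heq : (fun y => fderiv ℝ (f x) y (Pi.single i 1))
        = fun y => (ContinuousLinearMap.apply ℝ ℝ (((0 : ℝ), Pi.single i 1) : ℝ × (Fin n → ℝ)))
            ((fderiv ℝ u) ((x, y) : ℝ × (Fin n → ℝ))) := by
      funext y
      rw [hA x y]
      simp [happly]
    rw [heq]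
    have h1 : HasFDerivAt (fun y' : Fin n → ℝ => (x, y'))
        (ContinuousLinearMap.inr ℝ ℝ (Fin n → ℝ)) (g x) := hasFDerivAt_prodMk_right x (g x)
    have h2 := hD2.comp (g x) h1
    have h3 := ((ContinuousLinearMap.apply ℝ ℝ
        (((0 : ℝ), Pi.single i 1) : ℝ × (Fin n → ℝ))).hasFDerivAt).comp (g x) h2
    have h4 : HasFDerivAt (fun y => (ContinuousLinearMap.apply ℝ ℝ
        (((0 : ℝ), Pi.single i 1) : ℝ × (Fin n → ℝ))) (fderiv ℝ u (x, y)))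
        (((ContinuousLinearMap.apply ℝ ℝ (((0 : ℝ), Pi.single i 1) : ℝ × (Fin n → ℝ))).comp
          (D2.comp (ContinuousLinearMap.inr ℝ ℝ (Fin n → ℝ))))) (g x) := by
      simpa [Function.comp_def] using h3
    rw [h4.fderiv]
    simp [happly]
  -- mixed derivatives
  have hMixed : ∀ i : Fin n, deriv (fun x' => fderiv ℝ (f x') (g x) (Pi.single i 1)) x
      = D2 ((1 : ℝ), (0 : Fin n → ℝ)) ((0 : ℝ), Pi.single i 1) := by
    intro i
    have heq : (fun x' => fderiv ℝ (f x') (g x) (Pi.single i 1))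
        = fun x' => (ContinuousLinearMap.apply ℝ ℝ (((0 : ℝ), Pi.single i 1) : ℝ × (Fin n → ℝ)))
            ((fderiv ℝ u) ((x', g x) : ℝ × (Fin n → ℝ))) := by
      funext x'
      rw [hA x' (g x)]
      simp [happly]
    rw [heq]
    have h1 : HasDerivAt (fun x' : ℝ => ((x', g x) : ℝ × (Fin n → ℝ))) (1, 0) x :=
      (hasDerivAt_id x).prodMk (hasDerivAt_const x (g x))
    have h2 := hD2.comp_hasDerivAt x h1
    have h3 := ((ContinuousLinearMap.apply ℝ ℝ
        (((0 : ℝ), Pi.single i 1) : ℝ × (Fin n → ℝ))).hasFDerivAt).comp_hasDerivAt x h2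
    have h4 : HasDerivAt (fun x' => (ContinuousLinearMap.apply ℝ ℝ
        (((0 : ℝ), Pi.single i 1) : ℝ × (Fin n → ℝ))) (fderiv ℝ u (x', g x)))
        ((ContinuousLinearMap.apply ℝ ℝ (((0 : ℝ), Pi.single i 1) : ℝ × (Fin n → ℝ)))
          (D2 (1, 0))) x := by
      simpa [Function.comp_def] using h3
    rw [h4.deriv]
    simp [happly]
  -- derivative of the stationarity map
  have hψ : ∀ i : Fin n, HasDerivAt
      (fun x' => fderiv ℝ u (x', g x') (((0 : ℝ), Pi.single i 1) : ℝ × (Fin n → ℝ)))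
      (D2 (1, gd) ((0 : ℝ), Pi.single i 1)) x := by
    intro i
    have hpair : HasDerivAt (fun x' : ℝ => ((x', g x') : ℝ × (Fin n → ℝ))) (1, gd) x :=
      (hasDerivAt_id x).prodMk hgder
    have h2 := hD2.comp_hasDerivAt x hpair
    have h3 := ((ContinuousLinearMap.apply ℝ ℝ
        (((0 : ℝ), Pi.single i 1) : ℝ × (Fin n → ℝ))).hasFDerivAt).comp_hasDerivAt x h2
    simpa [happly, Function.comp_def] using h3
  have hΨ : HasDerivAt
      (fun x' => (fun i : Fin n => fderiv ℝ u (x', g x') (((0 : ℝ), Pi.single i 1))))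
      (fun i : Fin n => D2 (1, gd) ((0 : ℝ), Pi.single i 1)) x :=
    hasDerivAt_pi.mpr hψ
  have hFΨ : HasDerivAt
      (fun x' => Fᵀ.mulVec (fun i : Fin n => fderiv ℝ u (x', g x') (((0 : ℝ), Pi.single i 1))))
      (Fᵀ.mulVec (fun i : Fin n => D2 (1, gd) ((0 : ℝ), Pi.single i 1))) x := by
    have hcomp := (LinearMap.toContinuousLinearMap Fᵀ.mulVecLin).hasFDerivAt.comp_hasDerivAt x hΨ
    simpa only [Function.comp_def, LinearMap.coe_toContinuousLinearMap', Matrix.mulVecLin_apply]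
      using hcomp
  have hzero : (fun x' => Fᵀ.mulVec
      (fun i : Fin n => fderiv ℝ u (x', g x') (((0 : ℝ), Pi.single i 1))))
      = fun _ => (0 : Fin k → ℝ) := by
    funext x'
    rw [← hstat x']
    congr 1
    funext i
    rw [hA x' (g x')]
    simp
  have hkey : Fᵀ.mulVec (fun i : Fin n => D2 (1, gd) ((0 : ℝ), Pi.single i 1)) = 0 := by
    have h0 : HasDerivAt (fun _ : ℝ => (0 : Fin k → ℝ)) 0 x := hasDerivAt_const x 0
    rw [hzero] at hFΨ
    exact hFΨ.unique h0
  -- decompose D2 (1, gd)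
  have hvsum : ∀ v : Fin n → ℝ, v = ∑ j, v j • (Pi.single j 1 : Fin n → ℝ) := by
    intro v
    funext l
    simp [Finset.sum_apply, Pi.single_apply, Finset.sum_ite_eq', mul_comm]
  have hsplit : ∀ i : Fin n, D2 (1, gd) ((0 : ℝ), Pi.single i 1)
      = D2 ((1 : ℝ), (0 : Fin n → ℝ)) ((0 : ℝ), Pi.single i 1) + (H.mulVec gd) i := by
    intro i
    have h1 : ((1 : ℝ), gd) = ((1 : ℝ), (0 : Fin n → ℝ)) + ((0 : ℝ), gd) := by
      simp
    have h2 : (((0 : ℝ), gd) : ℝ × (Fin n → ℝ))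
        = ∑ j, gd j • (((0 : ℝ), Pi.single j 1) : ℝ × (Fin n → ℝ)) := by
      rw [Prod.ext_iff]
      constructor
      · simp [Prod.fst_sum]
      · simpa [Prod.snd_sum] using hvsum gd
    rw [h1, map_add, ContinuousLinearMap.add_apply, h2, map_sum]
    congr 1
    rw [ContinuousLinearMap.sum_apply]
    have hs : ∀ j, (D2 (gd j • (((0 : ℝ), Pi.single j 1) : ℝ × (Fin n → ℝ))))
        ((0 : ℝ), Pi.single i 1) = H i j * gd j := by
      intro j
      rw [D2.map_smul]
      simp [← hHD2 i j, mul_comm]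
    rw [Finset.sum_congr rfl (fun j _ => hs j)]
    simp [Matrix.mulVec, dotProduct]
  -- solve the linear system
  set mv := fun i : Fin n => D2 ((1 : ℝ), (0 : Fin n → ℝ)) ((0 : ℝ), Pi.single i 1) with hmv_def
  have hkey2 : (Fᵀ * H * F).mulVec z' = -(Fᵀ.mulVec mv) := by
    have hvec : (fun i : Fin n => D2 (1, gd) ((0 : ℝ), Pi.single i 1)) = mv + H.mulVec gd := by
      funext i
      rw [hsplit i]
      rfl
    have : Fᵀ.mulVec (mv + H.mulVec gd) = 0 := by rw [← hvec]; exact hkey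
    rw [Matrix.mulVec_add] at this
    have h3 : Fᵀ.mulVec (H.mulVec gd) = (Fᵀ * H * F).mulVec z' := by
      rw [hgd_def, Matrix.mulVec_mulVec, Matrix.mulVec_mulVec, Matrix.mul_assoc]
    rw [h3] at this
    linear_combination (norm := module) this
  have hz'eq : z' = -((Fᵀ * H * F)⁻¹.mulVec (Fᵀ.mulVec mv)) := by
    have h1 : (Fᵀ * H * F)⁻¹.mulVec ((Fᵀ * H * F).mulVec z') = z' := by
      rw [Matrix.mulVec_mulVec, Matrix.nonsing_inv_mul _ hinv, Matrix.one_mulVec]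
    rw [hkey2, Matrix.mulVec_neg] at h1
    exact h1.symm
  have hgderiv : deriv g x = gd := hgder.deriv
  have hmv2 : (fun i : Fin n => deriv (fun x' => fderiv ℝ (f x') (g x) (Pi.single i 1)) x)
      = mv := by
    funext i
    rw [hMixed i]
  rw [hgderiv, hgd_def, hz'eq, Matrix.mulVec_neg, hmv2]
end
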